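/- Consider the zero-potential problem −y'' = λ·Σᵢ mᵢ δ(x−tᵢ) y on [0,1] with y(0) = y(1) = 0, masses mᵢ > 0 and 0 < t₁ < ⋯ < tₙ < 1. With fundamental solutions φ(x) = x, ψ(x) = 1−x of y'' = 0, the discriminants satisfy D(η,ξ) = η − ξ for all 0 ≤ ξ < η ≤ 1; hence both hypotheses (H₀) (D(1,0) ≠ 0) and (H) (D(t_{i+1},t_i) ≠ 0 for all i) hold automatically, and the problem has exactly n distinct nonzero real Dirichlet eigenvalues. -/

import Mathlib

open Set

/-- `l` is a Dirichlet eigenvalue of the zero-potential problem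
`-y'' = l·Σᵢ mᵢ δ(x-tᵢ) y`, `y(0)=y(1)=0`: there is a nontrivial continuous
function `y` on `[0,1]`, linear on each `[tᵢ, tᵢ₊₁]` with slope `s i`, with
jump conditions `s(i-1) - s(i) = l·mᵢ·y(tᵢ)` and `y(0)=y(1)=0`. -/
def PLEigen (n : ℕ) (m t : ℕ → ℝ) (l : ℝ) : Prop :=
  ∃ (y : ℝ → ℝ) (s : ℕ → ℝ),
    ContinuousOn y (Set.Icc 0 1) ∧
    (∀ i ≤ n, ∀ x ∈ Set.Icc (t i) (t (i+1)), y x = y (t i) + s i * (x - t i)) ∧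
    (∀ i, 1 ≤ i → i ≤ n → s (i-1) - s i = l * m i * y (t i)) ∧
    y 0 = 0 ∧ y 1 = 0 ∧
    (∃ x ∈ Set.Icc (0:ℝ) 1, y x ≠ 0)

open Finset Matrix



def dgp (t : ℕ → ℝ) (k : ℕ) : ℝ := t (k+1) - t k

noncomputable def bbf (m t : ℕ → ℝ) (k : ℕ) : ℝ := (1/dgp t (k-1) + 1/dgp t k) / m k

noncomputable def ccf (m t : ℕ → ℝ) (k : ℕ) : ℝ :=
  -(1/(dgp t k * (Real.sqrt (m k) * Real.sqrt (m (k+1)))))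

noncomputable def Xmat (n : ℕ) (m t : ℕ → ℝ) : Matrix (Fin n) (Fin n) ℝ :=
  Matrix.of fun j k => if (j:ℕ) = (k:ℕ) then bbf m t ((j:ℕ)+1)
    else if (j:ℕ)+1 = (k:ℕ) then ccf m t ((j:ℕ)+1)
    else if (k:ℕ)+1 = (j:ℕ) then ccf m t ((k:ℕ)+1) else 0

def vhat (n : ℕ) (w : Fin n → ℝ) (i : ℕ) : ℝ :=
  if h : 1 ≤ i ∧ i ≤ n then w ⟨i-1, by omega⟩ else 0

lemma vhat_succ (n : ℕ) (w : Fin n → ℝ) (k : Fin n) : vhat n w ((k:ℕ)+1) = w k := by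
  rw [vhat, dif_pos ⟨by omega, by omega⟩]
  exact congrArg w (Fin.ext (by simp))

lemma vhat_zero (n : ℕ) (w : Fin n → ℝ) : vhat n w 0 = 0 := by
  rw [vhat, dif_neg (by omega)]

lemma vhat_ge (n : ℕ) (w : Fin n → ℝ) (i : ℕ) (h : n + 1 ≤ i) : vhat n w i = 0 := by
  rw [vhat, dif_neg (by omega)]

lemma Xmat_isHermitian (n : ℕ) (m t : ℕ → ℝ) : (Xmat n m t).IsHermitian := by
  show (Xmat n m t)ᴴ = Xmat n m t
  ext j k
  simp only [Matrix.conjTranspose_apply, Xmat, Matrix.of_apply, star_trivial]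
  rcases (show (j:ℕ) = (k:ℕ) ∨ (j:ℕ)+1 = (k:ℕ) ∨ (k:ℕ)+1 = (j:ℕ) ∨
      ((j:ℕ) ≠ (k:ℕ) ∧ (j:ℕ)+1 ≠ (k:ℕ) ∧ (k:ℕ)+1 ≠ (j:ℕ)) from by omega) with h | h | h | ⟨h1, h2, h3⟩
  · rw [if_pos h.symm, if_pos h, h]
  · rw [if_neg (by omega), if_neg (by omega), if_pos h, if_neg (by omega), if_pos h]
  · rw [if_neg (by omega), if_pos h, if_neg (by omega), if_neg (by omega), if_pos h]
  · rw [if_neg (by omega), if_neg (by omega), if_neg (by omega), if_neg (by omega),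
      if_neg (by omega), if_neg (by omega)]

lemma Xmat_row (n : ℕ) (m t : ℕ → ℝ) (w : Fin n → ℝ) (j : Fin n) :
    (Xmat n m t *ᵥ w) j =
      ccf m t j * vhat n w j + bbf m t ((j:ℕ)+1) * vhat n w ((j:ℕ)+1)
        + ccf m t ((j:ℕ)+1) * vhat n w ((j:ℕ)+2) := by
  have hg : ∀ k : Fin n, Xmat n m t j k * w k =
      ((if (k:ℕ)+1 = (j:ℕ) then ccf m t ((k:ℕ)+1) * vhat n w ((k:ℕ)+1) else 0)
        + (if (k:ℕ) = (j:ℕ) then bbf m t ((k:ℕ)+1) * vhat n w ((k:ℕ)+1) else 0)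
        + (if (k:ℕ) = (j:ℕ)+1 then ccf m t (k:ℕ) * vhat n w ((k:ℕ)+1) else 0)) := by
    intro k
    rw [vhat_succ]
    simp only [Xmat, Matrix.of_apply]
    rcases (show (j:ℕ) = (k:ℕ) ∨ (j:ℕ)+1 = (k:ℕ) ∨ (k:ℕ)+1 = (j:ℕ) ∨
        ((j:ℕ) ≠ (k:ℕ) ∧ (j:ℕ)+1 ≠ (k:ℕ) ∧ (k:ℕ)+1 ≠ (j:ℕ)) from by omega) with h | h | h | ⟨h1, h2, h3⟩
    · rw [if_pos h, if_neg (by omega), if_pos h.symm, if_neg (by omega), h]; ring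
    · rw [if_neg (by omega), if_pos h, if_neg (by omega), if_neg (by omega), if_pos h.symm, ← h]; ring
    · rw [if_neg (by omega), if_neg (by omega), if_pos h, if_pos h, if_neg (by omega),
        if_neg (by omega)]; ring
    · rw [if_neg (by omega), if_neg (by omega), if_neg (by omega), if_neg (by omega),
        if_neg (by omega), if_neg (by omega)]; ring
  rw [Matrix.mulVec, dotProduct]
  calc (∑ k : Fin n, Xmat n m t j k * w k)
      = ∑ i ∈ Finset.range n, ((if i+1 = (j:ℕ) then ccf m t (i+1) * vhat n w (i+1) else 0)
        + (if i = (j:ℕ) then bbf m t (i+1) * vhat n w (i+1) else 0)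
        + (if i = (j:ℕ)+1 then ccf m t i * vhat n w (i+1) else 0)) := by
        rw [← Fin.sum_univ_eq_sum_range (fun i => (if i+1 = (j:ℕ) then ccf m t (i+1) * vhat n w (i+1) else 0)
        + (if i = (j:ℕ) then bbf m t (i+1) * vhat n w (i+1) else 0)
        + (if i = (j:ℕ)+1 then ccf m t i * vhat n w (i+1) else 0)) n]
        exact Finset.sum_congr rfl fun k _ => hg k
    _ = _ := by
        rw [Finset.sum_add_distrib, Finset.sum_add_distrib]
        congr 1
        · congr 1
          · rcases Nat.eq_zero_or_pos (j:ℕ) with hj | hj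
            · rw [Finset.sum_eq_zero (fun i _ => by rw [if_neg (by omega)]), hj, vhat_zero,
                mul_zero]
            · have hstep : ∀ i ∈ Finset.range n,
                  (if i+1 = (j:ℕ) then ccf m t (i+1) * vhat n w (i+1) else 0)
                    = (if i = (j:ℕ)-1 then ccf m t (i+1) * vhat n w (i+1) else 0) := by
                intro i _
                by_cases h : i + 1 = (j:ℕ)
                · rw [if_pos h, if_pos (by omega)]
                · rw [if_neg h, if_neg (by omega)]
              rw [Finset.sum_congr rfl hstep, Finset.sum_ite_eq' (Finset.range n) ((j:ℕ)-1)
                (fun i => ccf m t (i+1) * vhat n w (i+1)),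
                if_pos (Finset.mem_range.2 (by omega : (j:ℕ)-1 < n)),
                (show (j:ℕ)-1+1 = (j:ℕ) from by omega)]
          · rw [Finset.sum_ite_eq' (Finset.range n) (j:ℕ)
              (fun i => bbf m t (i+1) * vhat n w (i+1)), if_pos (Finset.mem_range.2 j.2)]
        · rcases lt_or_ge ((j:ℕ)+1) n with hj | hj
          · rw [Finset.sum_ite_eq' (Finset.range n) ((j:ℕ)+1)
              (fun i => ccf m t i * vhat n w (i+1)), if_pos (Finset.mem_range.2 hj)]
          · rw [Finset.sum_eq_zero (fun i hi => by
              rw [if_neg (by have := Finset.mem_range.1 hi; omega)]),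
              vhat_ge n w ((j:ℕ)+2) (by omega), mul_zero]

lemma ccf_neg (m t : ℕ → ℝ) (k : ℕ) (h1 : 0 < dgp t k) (h2 : 0 < m k) (h3 : 0 < m (k+1)) :
    ccf m t k < 0 := by
  have hs2 : 0 < Real.sqrt (m k) := Real.sqrt_pos.2 h2
  have hs3 : 0 < Real.sqrt (m (k+1)) := Real.sqrt_pos.2 h3
  have : 0 < dgp t k * (Real.sqrt (m k) * Real.sqrt (m (k+1))) := by positivity
  rw [ccf]
  simp only [neg_lt, neg_zero]
  positivity

lemma vhat_all_zero (n : ℕ) (m t : ℕ → ℝ) (hm : ∀ i, 1 ≤ i → i ≤ n → 0 < m i)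
    (hd : ∀ i ≤ n, 0 < dgp t i) (μ : ℝ) (u : Fin n → ℝ)
    (heq : Xmat n m t *ᵥ u = μ • u) (h0 : vhat n u 1 = 0) : u = 0 := by
  have key : ∀ i, vhat n u i = 0 := by
    intro i
    induction i using Nat.strong_induction_on with
    | _ i ih =>
      match i, ih with
      | 0, _ => exact vhat_zero n u
      | 1, _ => exact h0
      | (r+2), ih =>
        rcases le_or_gt (r+2) n with hle | hlt
        · have hrn : r < n := by omega
          have hrow := congrFun heq ⟨r, hrn⟩
          rw [Xmat_row] at hrow
          simp only [Pi.smul_apply, smul_eq_mul, Fin.val_mk] at hrow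
          have hur : u ⟨r, hrn⟩ = vhat n u (r+1) := (vhat_succ n u ⟨r, hrn⟩).symm
          rw [hur, ih r (by omega), ih (r+1) (by omega)] at hrow
          have hc : ccf m t (r+1) ≠ 0 :=
            ne_of_lt (ccf_neg m t (r+1) (hd (r+1) (by omega)) (hm (r+1) (by omega) (by omega))
              (hm (r+2) (by omega) (by omega)))
          have : ccf m t (r+1) * vhat n u (r+2) = 0 := by linarith
          exact (mul_eq_zero.1 this).resolve_left hc
        · exact vhat_ge n u _ (by omega)
  funext k
  have := key ((k:ℕ)+1)
  rw [vhat_succ] at this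
  exact this

noncomputable def specS (n : ℕ) (m t : ℕ → ℝ) : Finset ℝ :=
  Finset.image (Xmat_isHermitian n m t).eigenvalues Finset.univ

lemma Xmat_transpose (n : ℕ) (m t : ℕ → ℝ) : (Xmat n m t)ᵀ = Xmat n m t := by
  rw [← Matrix.conjTranspose_eq_transpose_of_trivial]
  exact Xmat_isHermitian n m t

lemma Xmat_dot_symm (n : ℕ) (m t : ℕ → ℝ) (u w : Fin n → ℝ) :
    (Xmat n m t *ᵥ u) ⬝ᵥ w = u ⬝ᵥ (Xmat n m t *ᵥ w) := by
  rw [Matrix.dotProduct_mulVec, ← Matrix.mulVec_transpose, Xmat_transpose]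

lemma mem_specS_iff (n : ℕ) (m t : ℕ → ℝ) (l : ℝ) :
    l ∈ specS n m t ↔ ∃ w : Fin n → ℝ, w ≠ 0 ∧ Xmat n m t *ᵥ w = l • w := by
  constructor
  · intro hl
    obtain ⟨j, -, rfl⟩ := Finset.mem_image.1 hl
    refine ⟨⇑((Xmat_isHermitian n m t).eigenvectorBasis j), ?_,
      (Xmat_isHermitian n m t).mulVec_eigenvectorBasis j⟩
    intro h
    exact (Xmat_isHermitian n m t).eigenvectorBasis.orthonormal.ne_zero j
      (by ext i; exact congrFun h i)
  · rintro ⟨w, hw, hXw⟩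
    by_contra hl
    set hX := Xmat_isHermitian n m t with hXdef
    set b := hX.eigenvectorBasis with hbdef
    have hne : ∀ j, hX.eigenvalues j ≠ l := fun j hj =>
      hl (Finset.mem_image.2 ⟨j, Finset.mem_univ j, hj⟩)
    have hdot : ∀ j : Fin n, ⇑(b j) ⬝ᵥ w = 0 := by
      intro j
      have h1 : (Xmat n m t *ᵥ ⇑(b j)) ⬝ᵥ w = hX.eigenvalues j * (⇑(b j) ⬝ᵥ w) := by
        rw [hX.mulVec_eigenvectorBasis j, smul_dotProduct, smul_eq_mul]
      have h2 : (Xmat n m t *ᵥ ⇑(b j)) ⬝ᵥ w = l * (⇑(b j) ⬝ᵥ w) := by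
        rw [Xmat_dot_symm, hXw, dotProduct_smul, smul_eq_mul]
      have := sub_eq_zero.2 (h1.symm.trans h2)
      rw [← sub_mul] at this
      exact (mul_eq_zero.1 this).resolve_left (sub_ne_zero.2 (hne j))
    set W : EuclideanSpace ℝ (Fin n) := (WithLp.equiv 2 (Fin n → ℝ)).symm w with hWdef
    have hrepr : b.repr W = 0 := by
      ext j
      rw [OrthonormalBasis.repr_apply_apply]
      have : (inner ℝ (b j) W : ℝ) = ⇑(b j) ⬝ᵥ w := by
        simp [PiLp.inner_apply, RCLike.inner_apply, dotProduct, hWdef, mul_comm]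
      simp [this, hdot j]
    have : W = 0 := by
      have := congrArg b.repr.symm hrepr
      simpa using this
    exact hw (by ext i; exact congrFun (congrArg (WithLp.equiv 2 (Fin n → ℝ)) this) i)

/-- the discrete eigenvalue problem -/
def DEig (n : ℕ) (m t : ℕ → ℝ) (l : ℝ) : Prop :=
  ∃ v : ℕ → ℝ, v 0 = 0 ∧ (∀ i, n+1 ≤ i → v i = 0) ∧
    (∀ i, 1 ≤ i → i ≤ n →
      (v i - v (i-1)) / dgp t (i-1) - (v (i+1) - v i) / dgp t i = l * m i * v i) ∧
    (∃ i, 1 ≤ i ∧ i ≤ n ∧ v i ≠ 0)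

noncomputable def sqv (n : ℕ) (m : ℕ → ℝ) (v : ℕ → ℝ) (i : ℕ) : ℝ :=
  if 1 ≤ i ∧ i ≤ n then Real.sqrt (m i) * v i else 0

lemma rowcalc (n : ℕ) (m t : ℕ → ℝ) (hm : ∀ i, 1 ≤ i → i ≤ n → 0 < m i)
    (hd : ∀ i ≤ n, 0 < dgp t i) (v : ℕ → ℝ) (h0 : v 0 = 0) (htop : v (n+1) = 0)
    (k : ℕ) (hk1 : 1 ≤ k) (hkn : k ≤ n) :
    Real.sqrt (m k) * (ccf m t (k-1) * sqv n m v (k-1) + bbf m t k * sqv n m v k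
      + ccf m t k * sqv n m v (k+1))
    = (v k - v (k-1)) / dgp t (k-1) - (v (k+1) - v k) / dgp t k := by
  have hmk := hm k hk1 hkn
  have hsk : (0:ℝ) < Real.sqrt (m k) := Real.sqrt_pos.2 hmk
  have hss : Real.sqrt (m k) * Real.sqrt (m k) = m k := Real.mul_self_sqrt hmk.le
  have hdk := hd k hkn
  have hdk1 := hd (k-1) (by omega)
  have ha : Real.sqrt (m k) * (bbf m t k * sqv n m v k)
      = (1/dgp t (k-1) + 1/dgp t k) * v k := by
    rw [sqv, if_pos ⟨hk1, hkn⟩, bbf]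
    field_simp
    linear_combination v k * hss
  have hb : Real.sqrt (m k) * (ccf m t (k-1) * sqv n m v (k-1))
      = -(v (k-1) / dgp t (k-1)) := by
    rcases Nat.lt_or_ge k 2 with hk2 | hk2
    · have hk1' : k = 1 := by omega
      rw [hk1']
      simp [sqv, h0]
    · have hs' : (0:ℝ) < Real.sqrt (m (k-1)) := Real.sqrt_pos.2 (hm (k-1) (by omega) (by omega))
      rw [sqv, if_pos ⟨by omega, by omega⟩, ccf, (show k-1+1 = k from by omega)]
      field_simp
  have hc : Real.sqrt (m k) * (ccf m t k * sqv n m v (k+1)) = -(v (k+1) / dgp t k) := by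
    rcases Nat.lt_or_ge k n with hkn' | hkn'
    · have hs' : (0:ℝ) < Real.sqrt (m (k+1)) := Real.sqrt_pos.2 (hm (k+1) (by omega) (by omega))
      rw [sqv, if_pos ⟨by omega, by omega⟩, ccf]
      field_simp
    · have hk : k = n := by omega
      rw [sqv, if_neg (by omega), hk, htop]
      simp
  rw [mul_add, mul_add, ha, hb, hc]
  field_simp
  ring

lemma sqv_eq_vhat_fwd (n : ℕ) (m : ℕ → ℝ) (v : ℕ → ℝ) (i : ℕ) :
    vhat n (fun j : Fin n => sqv n m v ((j:ℕ)+1)) i = sqv n m v i := by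
  by_cases h : 1 ≤ i ∧ i ≤ n
  · rw [vhat, dif_pos h]
    have : i - 1 + 1 = i := by omega
    simp only [this]
  · rw [vhat, dif_neg h, sqv, if_neg h]

lemma DEig_iff_eigvec (n : ℕ) (m t : ℕ → ℝ) (hm : ∀ i, 1 ≤ i → i ≤ n → 0 < m i)
    (hd : ∀ i ≤ n, 0 < dgp t i) (l : ℝ) :
    DEig n m t l ↔ ∃ w : Fin n → ℝ, w ≠ 0 ∧ Xmat n m t *ᵥ w = l • w := by
  constructor
  · rintro ⟨v, h0, htop, heq, i, hi1, hin, hvi⟩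
    refine ⟨fun j : Fin n => sqv n m v ((j:ℕ)+1), ?_, ?_⟩
    · intro hcon
      have := congrFun hcon ⟨i-1, by omega⟩
      simp only [Pi.zero_apply] at this
      rw [show i-1+1 = i from by omega] at this
      have h2 : sqv n m v i = 0 := this
      rw [sqv, if_pos ⟨hi1, hin⟩] at h2
      exact hvi ((mul_eq_zero.1 h2).resolve_left
        (ne_of_gt (Real.sqrt_pos.2 (hm i hi1 hin))))
    · funext j
      rw [Xmat_row]
      simp only [sqv_eq_vhat_fwd, Pi.smul_apply, smul_eq_mul]
      set k := (j:ℕ)+1 with hk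
      have hk1 : 1 ≤ k := by omega
      have hkn : k ≤ n := by omega
      have hsk : (0:ℝ) < Real.sqrt (m k) := Real.sqrt_pos.2 (hm k hk1 hkn)
      have hss : Real.sqrt (m k) * Real.sqrt (m k) = m k := Real.mul_self_sqrt (hm k hk1 hkn).le
      apply mul_left_cancel₀ (ne_of_gt hsk)
      have hj : (j:ℕ) = k - 1 := by omega
      rw [hj, show k-1+2 = k+1 from by omega]
      rw [rowcalc n m t hm hd v h0 (htop (n+1) le_rfl) k hk1 hkn, heq k hk1 hkn,
        sqv, if_pos ⟨hk1, hkn⟩]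
      linear_combination (-(l * v k)) * hss
  · rintro ⟨w, hw, hXw⟩
    refine ⟨fun i => vhat n w i / Real.sqrt (m i), ?_, ?_, ?_, ?_⟩
    · show vhat n w 0 / Real.sqrt (m 0) = 0
      rw [vhat_zero]; simp
    · intro i hi
      show vhat n w i / Real.sqrt (m i) = 0
      rw [vhat_ge n w i hi]; simp
    · intro k hk1 hkn
      set v : ℕ → ℝ := fun i => vhat n w i / Real.sqrt (m i) with hv
      have hsqv : ∀ i, sqv n m v i = vhat n w i := by
        intro i
        by_cases h : 1 ≤ i ∧ i ≤ n
        · rw [sqv, if_pos h, hv]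
          have hsi : (0:ℝ) < Real.sqrt (m i) := Real.sqrt_pos.2 (hm i h.1 h.2)
          field_simp
        · rw [sqv, if_neg h]
          rcases (show i = 0 ∨ n+1 ≤ i from by omega) with h' | h'
          · rw [h', vhat_zero]
          · rw [vhat_ge n w i h']
      have hrow := congrFun hXw ⟨k-1, by omega⟩
      rw [Xmat_row] at hrow
      simp only [Pi.smul_apply, smul_eq_mul, Fin.val_mk] at hrow
      rw [(show k-1+1 = k from by omega), (show k-1+2 = k+1 from by omega)] at hrow
      have hwk : w ⟨k-1, by omega⟩ = vhat n w k := by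
        have := vhat_succ n w ⟨k-1, by omega⟩
        simp only [Fin.val_mk, (show k-1+1 = k from by omega)] at this
        exact this.symm
      rw [hwk] at hrow
      have hsk : (0:ℝ) < Real.sqrt (m k) := Real.sqrt_pos.2 (hm k hk1 hkn)
      have hss : Real.sqrt (m k) * Real.sqrt (m k) = m k := Real.mul_self_sqrt (hm k hk1 hkn).le
      have h0 : v 0 = 0 := by rw [hv]; simp [vhat_zero]
      have htop : v (n+1) = 0 := by rw [hv]; simp [vhat_ge n w (n+1) le_rfl]
      have := rowcalc n m t hm hd v h0 htop k hk1 hkn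
      rw [hsqv (k-1), hsqv k, hsqv (k+1)] at this
      rw [← this, hrow]
      have hvk : vhat n w k = Real.sqrt (m k) * v k := by
        rw [hv]
        field_simp
      rw [hvk]
      linear_combination l * v k * hss
    · have : ∃ j : Fin n, w j ≠ 0 := by
        by_contra hcon
        push_neg at hcon
        exact hw (funext fun j => hcon j)
      obtain ⟨j, hj⟩ := this
      refine ⟨(j:ℕ)+1, by omega, by omega, ?_⟩
      show vhat n w ((j:ℕ)+1) / Real.sqrt (m ((j:ℕ)+1)) ≠ 0
      rw [vhat_succ n w j]
      exact div_ne_zero hj (ne_of_gt (Real.sqrt_pos.2 (hm ((j:ℕ)+1) (by omega) (by omega))))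

lemma vhat_sub_smul (n : ℕ) (c d : ℝ) (u v : Fin n → ℝ) (i : ℕ) :
    vhat n (c • v - d • u) i = c * vhat n v i - d * vhat n u i := by
  by_cases h : 1 ≤ i ∧ i ≤ n
  · rw [vhat, vhat, vhat, dif_pos h, dif_pos h, dif_pos h]; simp
  · rw [vhat, vhat, vhat, dif_neg h, dif_neg h, dif_neg h]; ring

lemma eig_inj (n : ℕ) (m t : ℕ → ℝ) (hn : 1 ≤ n) (hm : ∀ i, 1 ≤ i → i ≤ n → 0 < m i)
    (hd : ∀ i ≤ n, 0 < dgp t i) :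
    Function.Injective (Xmat_isHermitian n m t).eigenvalues := by
  set hX := Xmat_isHermitian n m t with hXdef
  set b := hX.eigenvectorBasis with hbdef
  have hdotb : ∀ i j : Fin n, ⇑(b i) ⬝ᵥ ⇑(b j) = if i = j then 1 else 0 := by
    intro i j
    have horth := orthonormal_iff_ite.mp b.orthonormal i j
    have : (inner ℝ (b i) (b j) : ℝ) = ⇑(b i) ⬝ᵥ ⇑(b j) := by
      simp [PiLp.inner_apply, RCLike.inner_apply, dotProduct, mul_comm]
    rw [this] at horth
    exact horth
  intro i j hij
  by_contra hne
  have hbi : Xmat n m t *ᵥ ⇑(b i) = hX.eigenvalues i • ⇑(b i) := hX.mulVec_eigenvectorBasis i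
  have hbj : Xmat n m t *ᵥ ⇑(b j) = hX.eigenvalues i • ⇑(b j) := by
    rw [hij]; exact hX.mulVec_eigenvectorBasis j
  have hbjne : ⇑(b j) ≠ (0 : Fin n → ℝ) := by
    intro h
    have := hdotb j j
    rw [h] at this
    simp at this
  have hbj0 : vhat n (⇑(b j)) 1 ≠ 0 := by
    intro h
    exact hbjne (vhat_all_zero n m t hm hd _ _ hbj h)
  set c := vhat n (⇑(b i)) 1 with hc
  set d' := vhat n (⇑(b j)) 1 with hd'
  have hwe : Xmat n m t *ᵥ (c • ⇑(b j) - d' • ⇑(b i))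
      = hX.eigenvalues i • (c • ⇑(b j) - d' • ⇑(b i)) := by
    rw [Matrix.mulVec_sub, Matrix.mulVec_smul, Matrix.mulVec_smul, hbi, hbj]
    module
  have hw1 : vhat n (c • ⇑(b j) - d' • ⇑(b i)) 1 = 0 := by
    rw [vhat_sub_smul, ← hc, ← hd']
    ring
  have hzero : c • ⇑(b j) - d' • ⇑(b i) = 0 :=
    vhat_all_zero n m t hm hd _ _ hwe hw1
  have hcv : c • ⇑(b j) = d' • ⇑(b i) := by rwa [sub_eq_zero] at hzero
  have h1 : ⇑(b i) ⬝ᵥ (c • ⇑(b j)) = 0 := by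
    rw [dotProduct_smul, hdotb i j, if_neg hne]
    simp
  have h2 : ⇑(b i) ⬝ᵥ (d' • ⇑(b i)) = d' := by
    rw [dotProduct_smul, hdotb i i, if_pos rfl]
    simp
  rw [hcv, h2] at h1
  exact hbj0 h1

lemma DEig_zero_false (n : ℕ) (m t : ℕ → ℝ) (hn : 1 ≤ n) (ht0 : t 0 = 0) (ht1 : t (n+1) = 1)
    (hd : ∀ i ≤ n, 0 < dgp t i) : ¬ DEig n m t 0 := by
  rintro ⟨v, h0, htop, heq, i, hi1, hin, hvi⟩
  set c := (v 1 - v 0) / dgp t 0 with hcdef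
  have hslope : ∀ i ≤ n, (v (i+1) - v i) / dgp t i = c := by
    intro i hi
    induction i with
    | zero => rfl
    | succ r ih =>
      have hr := ih (by omega)
      have h1 := heq (r+1) (by omega) (by omega)
      rw [zero_mul, zero_mul, (show r+1-1 = r from by omega)] at h1
      linarith
  have hlin : ∀ i ≤ n+1, v i = c * (t i - t 0) := by
    intro i hi
    induction i with
    | zero => rw [h0]; ring
    | succ r ih =>
      have hr := ih (by omega)
      have hs := hslope r (by omega)
      have hdr := hd r (by omega)
      have hstep : v (r+1) = v r + c * dgp t r := by
        rw [div_eq_iff (ne_of_gt hdr)] at hs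
        linarith
      rw [hstep, hr, dgp]
      ring
  have hfin := hlin (n+1) le_rfl
  rw [htop (n+1) le_rfl, ht1, ht0, sub_zero, mul_one] at hfin
  have := hlin i (by omega)
  rw [← hfin] at this
  simp at this
  exact hvi this

lemma tmono (n : ℕ) (t : ℕ → ℝ) (htmono : ∀ i ≤ n, t i < t (i+1)) :
    ∀ i j, i ≤ j → j ≤ n+1 → t i ≤ t j := by
  intro i j hij hjn
  induction j with
  | zero =>
    rw [show i = 0 from by omega]
  | succ r ih =>
    rcases Nat.lt_or_ge i (r+1) with h | h
    · exact le_trans (ih (by omega) (by omega)) (htmono r (by omega)).le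
    · rw [show i = r+1 from by omega]

lemma cover (t : ℕ → ℝ) : ∀ k, ∀ x : ℝ, t 0 ≤ x → x ≤ t (k+1) →
    ∃ i, i ≤ k ∧ t i ≤ x ∧ x ≤ t (i+1) := by
  intro k
  induction k with
  | zero => exact fun x h1 h2 => ⟨0, le_rfl, h1, h2⟩
  | succ r ih =>
    intro x h1 h2
    rcases le_or_gt x (t (r+1)) with h | h
    · obtain ⟨i, hik, hi⟩ := ih x h1 h
      exact ⟨i, by omega, hi⟩
    · exact ⟨r+1, le_rfl, h.le, h2⟩


lemma PLEigen_iff_DEig (n : ℕ) (m t : ℕ → ℝ) (hn : 1 ≤ n)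
    (ht0 : t 0 = 0) (ht1 : t (n+1) = 1)
    (htmono : ∀ i ≤ n, t i < t (i+1)) (l : ℝ) :
    PLEigen n m t l ↔ DEig n m t l := by
  have hd : ∀ i ≤ n, 0 < dgp t i := fun i hi => sub_pos.2 (htmono i hi)
  have hmono := tmono n t htmono
  constructor
  · rintro ⟨y, s, hcont, hlin, hjump, hy0, hy1, x₀, hx₀, hyx₀⟩
    set v : ℕ → ℝ := fun i => if i ≤ n+1 then y (t i) else 0 with hvdef
    have hv0 : v 0 = 0 := by rw [hvdef]; simp only [if_pos (by omega : (0:ℕ) ≤ n+1)]; rw [ht0, hy0]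
    have hvtop : ∀ i, n+1 ≤ i → v i = 0 := by
      intro i hi
      rcases Nat.lt_or_ge (n+1) i with h | h
      · rw [hvdef]; simp only []; rw [if_neg (by omega)]
      · rw [hvdef]; simp only []
        rw [show i = n+1 from by omega, if_pos le_rfl, ht1, hy1]
    have hvk : ∀ k ≤ n+1, v k = y (t k) := by
      intro k hk; rw [hvdef]; simp only []; rw [if_pos hk]
    have hs : ∀ k ≤ n, s k = (v (k+1) - v k) / dgp t k := by
      intro k hk
      rw [hvk (k+1) (by omega), hvk k (by omega)]
      have := hlin k hk (t (k+1)) ⟨(htmono k hk).le, le_rfl⟩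
      rw [eq_div_iff (ne_of_gt (hd k hk)), this, dgp]
      ring
    refine ⟨v, hv0, hvtop, ?_, ?_⟩
    · intro i hi1 hin
      have h1 := hs (i-1) (by omega)
      have h2 := hs i (by omega)
      rw [show i-1+1 = i from by omega] at h1
      rw [← h1, ← h2, hjump i hi1 hin, hvk i (by omega)]
    · by_contra hcon
      push_neg at hcon
      have hvall : ∀ i ≤ n+1, v i = 0 := by
        intro i hi
        rcases Nat.eq_zero_or_pos i with h | h
        · rw [h, hv0]
        · rcases Nat.lt_or_ge i (n+1) with h' | h'
          · exact hcon i (by omega) (by omega)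
          · exact hvtop i (by omega)
      have hcov : ∃ k, k ≤ n ∧ t k ≤ x₀ ∧ x₀ ≤ t (n+1) → True := ⟨0, by simp⟩
      obtain ⟨k, hk, hk1, hk2⟩ := cover t n x₀ (by rw [ht0]; exact hx₀.1) (by rw [ht1]; exact hx₀.2)
      have := hlin k hk x₀ ⟨hk1, hk2⟩
      rw [hs k hk, hvall (k+1) (by omega), hvall k (by omega)] at this
      have hyk : y (t k) = 0 := by
        have := hvk k (by omega); rw [hvall k (by omega)] at this; exact this.symm
      rw [hyk] at this
      simp at this
      exact hyx₀ this
  · rintro ⟨v, hv0, hvtop, heq, i₀, hi₀1, hi₀n, hvi₀⟩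
    set s : ℕ → ℝ := fun i => (v (i+1) - v i) / dgp t i with hsdef
    set y : ℝ → ℝ := fun x =>
      ∑ i ∈ Finset.range (n+1), s i * (min (max x (t i)) (t (i+1)) - t i) with hydef
    have key : ∀ k ≤ n, ∀ x : ℝ, t k ≤ x → x ≤ t (k+1) → y x = v k + s k * (x - t k) := by
      intro k hk x hx1 hx2
      have hterm : ∀ i ∈ Finset.range (n+1),
          s i * (min (max x (t i)) (t (i+1)) - t i)
          = (if i < k then v (i+1) - v i else 0) + (if i = k then s k * (x - t k) else 0) := by
        intro i hi
        have hin : i ≤ n := by have := Finset.mem_range.1 hi; omega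
        rcases Nat.lt_trichotomy i k with h | h | h
        · rw [if_pos h, if_neg (by omega)]
          have h1 : t (i+1) ≤ x := le_trans (hmono (i+1) k (by omega) (by omega)) hx1
          have h2 : t i ≤ x := le_trans (hmono i (i+1) (by omega) (by omega)) h1
          rw [max_eq_left h2, min_eq_right h1, hsdef]
          simp only []
          rw [dgp, div_mul_cancel₀ _ (show t (i+1) - t i ≠ 0 from (hd i hin).ne')]
          ring
        · rw [if_neg (by omega), if_pos h, h]
          rw [max_eq_left hx1, min_eq_left hx2]
          ring_nf
        · rw [if_neg (by omega), if_neg (by omega)]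
          have h1 : x ≤ t i := le_trans hx2 (hmono (k+1) i (by omega) (by omega))
          rw [max_eq_right h1, min_eq_left (hmono i (i+1) (by omega) (by omega))]
          ring
      rw [hydef]
      simp only []
      rw [Finset.sum_congr rfl hterm, Finset.sum_add_distrib]
      congr 1
      · rw [← Finset.sum_subset (Finset.range_subset_range.2 (show k ≤ n+1 from by omega))
          (fun x _ hx => if_neg (by simpa using hx))]
        rw [Finset.sum_congr rfl (fun i hi => if_pos (Finset.mem_range.1 hi)),
          Finset.sum_range_sub v k, hv0, sub_zero]
      · rw [Finset.sum_ite_eq' (Finset.range (n+1)) k (fun _ => s k * (x - t k)),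
          if_pos (Finset.mem_range.2 (by omega))]
    have hytk : ∀ k ≤ n, y (t k) = v k := by
      intro k hk
      rw [key k hk (t k) le_rfl (htmono k hk).le]
      simp
    refine ⟨y, s, ?_, ?_, ?_, ?_, ?_, ?_⟩
    · apply Continuous.continuousOn
      apply continuous_finset_sum
      intro i _
      exact continuous_const.mul
        (((continuous_id.max continuous_const).min continuous_const).sub continuous_const)
    · intro i hi x hx
      rw [key i hi x hx.1 hx.2, hytk i hi]
    · intro i hi1 hin
      rw [hytk i (by omega), hsdef]
      simp only []
      rw [show i-1+1 = i from by omega]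
      exact heq i hi1 hin
    · have h := hytk 0 (by omega)
      rw [ht0] at h
      rw [h, hv0]
    · rw [← ht1, key n (by omega) (t (n+1)) (htmono n le_rfl).le le_rfl, hsdef]
      simp only []
      rw [dgp, div_mul_cancel₀ _ (show t (n+1) - t n ≠ 0 from (hd n le_rfl).ne'),
        hvtop (n+1) le_rfl]
      ring
    · refine ⟨t i₀, ⟨?_, ?_⟩, ?_⟩
      · rw [← ht0]; exact hmono 0 i₀ (by omega) (by omega)
      · rw [← ht1]; exact hmono i₀ (n+1) (by omega) (by omega)
      · rw [hytk i₀ (by omega)]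
        exact hvi₀

/-- For the zero-potential problem with fundamental solutions `φ(x) = x`,
`ψ(x) = 1-x`, the discriminants satisfy `D(η,ξ) = η-ξ` (so hypotheses (H₀)
and (H) hold automatically), and the problem has exactly `n` distinct nonzero
real Dirichlet eigenvalues. -/
theorem stmt_15 (n : ℕ) (hn : 1 ≤ n) (m t : ℕ → ℝ)
    (hm : ∀ i, 1 ≤ i → i ≤ n → 0 < m i)
    (ht0 : t 0 = 0) (ht1 : t (n+1) = 1)
    (htmono : ∀ i ≤ n, t i < t (i+1)) :
    (∀ ξ η : ℝ, η * (1 - ξ) - (1 - η) * ξ = η - ξ) ∧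
    ((1:ℝ) - 0 ≠ 0) ∧ (∀ i ≤ n, t (i+1) - t i ≠ 0) ∧
    ∃ S : Finset ℝ, S.card = n ∧ (0:ℝ) ∉ S ∧
      ∀ l : ℝ, (PLEigen n m t l ↔ l ∈ S) := by
  have hd : ∀ i ≤ n, 0 < dgp t i := fun i hi => sub_pos.2 (htmono i hi)
  refine ⟨fun ξ η => by ring, by norm_num, fun i hi => sub_ne_zero.2 (htmono i hi).ne', ?_⟩
  refine ⟨specS n m t, ?_, ?_, ?_⟩
  · rw [specS, Finset.card_image_of_injective _ (eig_inj n m t hn hm hd), Finset.card_univ,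
      Fintype.card_fin]
  · intro h0
    exact DEig_zero_false n m t hn ht0 ht1 hd
      ((DEig_iff_eigvec n m t hm hd 0).2 ((mem_specS_iff n m t 0).1 h0))
  · intro l
    rw [PLEigen_iff_DEig n m t hn ht0 ht1 htmono l, DEig_iff_eigvec n m t hm hd l,
      ← mem_specS_iff n m t l]
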